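/- Let (R, m) be a commutative noetherian local ring, I an ideal of R, X an R-module and Y ⊆ X a submodule. Let (Y :_X I) = { u ∈ X : I•u ⊆ Y } and let α : (Y :_X I) → Hom_R(I, Y) be the R-linear map defined by α(u)(r) = r•u. Then: (1) if Hom_R(R/I, X) = 0, then α is injective; (2) if Ext^1_R(R/I, X) = 0, then α is surjective. -/

import Mathlib

open CategoryTheory

/-- For a submodule `Y` of `X` and an ideal `I`, the submodule `(Y :_X I) = {u ∈ X | I•u ⊆ Y}`. -/
def colonSub {R : Type u} [CommRing R] {X : Type v} [AddCommGroup X] [Module R X]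
    (Y : Submodule R X) (I : Ideal R) : Submodule R X where
  carrier := {u | ∀ r ∈ I, r • u ∈ Y}
  add_mem' := by
    intro a b ha hb r hr
    rw [smul_add]
    exact Y.add_mem (ha r hr) (hb r hr)
  zero_mem' := by
    intro r hr
    simp
  smul_mem' := by
    intro c u hu r hr
    rw [smul_comm]
    exact Y.smul_mem c (hu r hr)

/-- The map `α : (Y :_X I) → Hom_R(I, Y)` defined by `α(u)(r) = r • u`. -/
def alphaMap {R : Type u} [CommRing R] {X : Type v} [AddCommGroup X] [Module R X]
    (Y : Submodule R X) (I : Ideal R) : ↥(colonSub Y I) →ₗ[R] (I →ₗ[R] Y) where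
  toFun u :=
    { toFun := fun r => ⟨(r : R) • (u : X), u.2 r r.2⟩
      map_add' := by
        intro r s
        apply Subtype.ext
        simp [add_smul]
      map_smul' := by
        intro c r
        apply Subtype.ext
        simp [mul_smul] }
  map_add' := by
    intro u v
    refine LinearMap.ext fun r => Subtype.ext ?_
    simp [smul_add]
  map_smul' := by
    intro c u
    refine LinearMap.ext fun r => Subtype.ext ?_
    simpa using smul_comm (r : R) c (u : X)


noncomputable section AuxExt
open CategoryTheory Limits

/-- If `Ext¹(R/I, X) = 0`, then every `R`-linear map `I → X` extends to `R`. -/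
theorem aux_ext_extension {R : Type u} [CommRing R] (I : Ideal R) (X : Type u)
    [AddCommGroup X] [Module R X]
    (h : Subsingleton (((Ext R (ModuleCat.{u} R) 1).obj
        (Opposite.op (ModuleCat.of R (R ⧸ I)))).obj (ModuleCat.of R X)))
    (f : ↥I →ₗ[R] X) : ∃ g : R →ₗ[R] X, ∀ x : ↥I, g (x : R) = f x := by
  classical
  let M : ModuleCat.{u} R := ModuleCat.of R (R ⧸ I)
  let X' : ModuleCat.{u} R := ModuleCat.of R X
  let P : ProjectiveResolution M := (HasProjectiveResolution.out (Z := M)).some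
  let K := P.complex.linearYonedaObj R X'
  -- transfer the subsingleton hypothesis to the homology of the Hom-complex
  have e : ((Ext R (ModuleCat.{u} R) 1).obj (Opposite.op M)).obj X' ≅ K.homology 1 :=
    P.isoExt 1 X'
  haveI hsub : Subsingleton (K.homology 1) := e.toLinearEquiv.symm.toEquiv.subsingleton
  have hzero : IsZero (K.homology 1) := ModuleCat.isZero_of_subsingleton _
  have hEx1 : (K.sc' 0 1 2).Exact :=
    (HomologicalComplex.exactAt_iff' K 0 1 2 (by simp) (by simp)).1
      ((HomologicalComplex.exactAt_iff_isZero_homology K 1).2 hzero)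
  rw [ShortComplex.moduleCat_exact_iff] at hEx1
  -- exactness of the resolution at degree 0
  have hEx0 : (ShortComplex.mk (P.complex.d 1 0) (P.π.f 0)
      P.complex_d_comp_π_f_zero).Exact :=
    ShortComplex.exact_of_g_is_cokernel _ P.isColimitCokernelCofork
  rw [ShortComplex.moduleCat_exact_iff] at hEx0
  -- set up the maps
  haveI : Projective (ModuleCat.of R R) :=
    ModuleCat.projective_of_free (Module.Basis.singleton PUnit.{u+1} R)
  let q : ModuleCat.of R R ⟶ M := ModuleCat.ofHom (I.mkQ)
  haveI : Epi q := (ModuleCat.epi_iff_surjective q).2 (Submodule.mkQ_surjective I)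
  let π0 : P.complex.X 0 ⟶ M := P.π.f 0
  haveI : Epi π0 := inferInstanceAs (Epi (P.π.f 0))
  let a : ModuleCat.of R R ⟶ P.complex.X 0 := Projective.factorThru q π0
  let b : P.complex.X 0 ⟶ ModuleCat.of R R := Projective.factorThru π0 q
  let a' : R →ₗ[R] P.complex.X 0 := a.hom
  let b' : P.complex.X 0 →ₗ[R] R := b.hom
  let d10 : P.complex.X 1 →ₗ[R] P.complex.X 0 := (P.complex.d 1 0).hom
  have ha : ∀ r : R, π0 (a' r) = Submodule.Quotient.mk r := fun r =>
    ConcreteCategory.congr_hom (Projective.factorThru_comp q π0) r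
  have hb : ∀ x : P.complex.X 0, (Submodule.Quotient.mk (b' x) : R ⧸ I) = π0 x := fun x =>
    ConcreteCategory.congr_hom (Projective.factorThru_comp π0 q) x
  have hd0 : ∀ p : P.complex.X 1, π0 (d10 p) = 0 := fun p =>
    ConcreteCategory.congr_hom P.complex_d_comp_π_f_zero p
  have hmem : ∀ p : P.complex.X 1, b' (d10 p) ∈ I := by
    intro p
    rw [← Submodule.Quotient.mk_eq_zero I, hb, hd0]
  -- the cocycle associated to f
  let β : P.complex.X 1 →ₗ[R] ↥I := LinearMap.codRestrict I (b'.comp d10) hmem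
  let φ : P.complex.X 1 ⟶ X' := ModuleCat.ofHom (f.comp β)
  have hφ : (K.sc' 0 1 2).g φ = 0 := by
    show (K.d 1 2) φ = 0
    rw [ChainComplex.linearYonedaObj_d]
    show P.complex.d 2 1 ≫ φ = 0
    refine ModuleCat.hom_ext (LinearMap.ext fun p => ?_)
    show f (β (P.complex.d 2 1 p)) = 0
    have hβ : β (P.complex.d 2 1 p) = 0 := by
      apply Subtype.ext
      show b' (d10 (P.complex.d 2 1 p)) = 0
      have h21 : d10 (P.complex.d 2 1 p) = 0 :=
        ConcreteCategory.congr_hom (P.complex.d_comp_d 2 1 0) p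
      rw [h21]; exact map_zero _
    rw [hβ]; exact map_zero _
  obtain ⟨ψ₀, hψ⟩ := hEx1 φ hφ
  let ψ : P.complex.X 0 →ₗ[R] X := ModuleCat.Hom.hom (ψ₀ : P.complex.X 0 ⟶ X')
  have hψ' : ∀ p : P.complex.X 1, ψ (d10 p) = f (β p) := by
    intro p
    have h1 : (K.d 0 1) ψ₀ = φ := hψ
    rw [ChainComplex.linearYonedaObj_d] at h1
    have h' : P.complex.d 1 0 ≫ (ψ₀ : P.complex.X 0 ⟶ X') = φ := h1
    exact ConcreteCategory.congr_hom h' p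
  -- the correction term
  have hmem2 : ∀ r : R, b' (a' r) - r ∈ I := by
    intro r
    rw [← Submodule.Quotient.mk_eq_zero I]
    have : (Submodule.Quotient.mk (b' (a' r) - r) : R ⧸ I) =
        Submodule.Quotient.mk (b' (a' r)) - Submodule.Quotient.mk r :=
      Submodule.Quotient.mk_sub _
    rw [this, hb, ha, sub_self]
  let ec : R →ₗ[R] ↥I := LinearMap.codRestrict I (b'.comp a' - LinearMap.id) hmem2
  refine ⟨ψ.comp a' - f.comp ec, fun x => ?_⟩
  obtain ⟨p, hp⟩ := hEx0 (a' (x : R)) (by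
    show π0 (a' (x : R)) = 0
    rw [ha]
    exact (Submodule.Quotient.mk_eq_zero I).2 x.2)
  have hp' : d10 p = a' (x : R) := hp
  have h1 : ψ (a' (x : R)) = f (β p) := by rw [← hp']; exact hψ' p
  have h2 : β p = ⟨b' (a' (x : R)), by rw [← hp']; exact hmem p⟩ := by
    apply Subtype.ext
    show b' (d10 p) = b' (a' (x : R))
    rw [hp']
  have h3 : (⟨b' (a' (x : R)), by rw [← hp']; exact hmem p⟩ : ↥I) - ec (x : R) = x := by
    apply Subtype.ext
    show b' (a' (x : R)) - (b' (a' (x : R)) - (x : R)) = (x : R)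
    ring
  show ψ (a' (x : R)) - f (ec (x : R)) = f x
  rw [h1, h2, ← map_sub, h3]

end AuxExt

/-- Lemma 1.8: (1) if `Hom_R(R/I, X) = 0` then `α` is injective;
(2) if `Ext¹_R(R/I, X) = 0` then `α` is surjective. -/
theorem alphaMap_injective_and_surjective
    {R : Type u} [CommRing R] [IsNoetherianRing R] [IsLocalRing R]
    (X : Type u) [AddCommGroup X] [Module R X] (Y : Submodule R X) (I : Ideal R) :
    ((∀ f : (R ⧸ I) →ₗ[R] X, f = 0) → Function.Injective (alphaMap Y I)) ∧
    (Subsingleton (((Ext R (ModuleCat.{u} R) 1).obj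
        (Opposite.op (ModuleCat.of R (R ⧸ I)))).obj (ModuleCat.of R X)) →
      Function.Surjective (alphaMap Y I)) := by
  constructor
  · intro h u v huv
    have hw : ∀ r : R, r ∈ I → r • ((u : X) - (v : X)) = 0 := by
      intro r hr
      have := congrArg (fun g => ((g ⟨r, hr⟩ : Y) : X)) huv
      simp only [alphaMap, LinearMap.coe_mk, AddHom.coe_mk] at this
      rw [smul_sub, this, sub_self]
    let w : X := (u : X) - (v : X)
    have hker : I ≤ LinearMap.ker (LinearMap.toSpanSingleton R X w) := by
      intro r hr
      exact hw r hr
    have h0 := h (Submodule.liftQ I (LinearMap.toSpanSingleton R X w) hker)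
    have h1 : w = 0 := by
      have h2 := DFunLike.congr_fun h0 (Submodule.Quotient.mk (1 : R))
      rw [Submodule.liftQ_apply] at h2
      simpa using h2
    exact Subtype.ext (sub_eq_zero.mp h1)
  · intro h f
    obtain ⟨g, hg⟩ := aux_ext_extension I X h (Y.subtype.comp f)
    have hu : g 1 ∈ colonSub Y I := by
      intro r hr
      have : r • g 1 = g r := by rw [← map_smul, smul_eq_mul, mul_one]
      rw [this, hg ⟨r, hr⟩]
      exact (f ⟨r, hr⟩).2
    refine ⟨⟨g 1, hu⟩, ?_⟩
    refine LinearMap.ext fun r => Subtype.ext ?_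
    show (r : R) • g 1 = ((f r : Y) : X)
    rw [← map_smul, smul_eq_mul, mul_one, hg r]
    rfl
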